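/- arXiv:1305.5009 — 2 statements merged into one kernel-verified Lean document; each statement's English description precedes it below -/
import Mathlib

section
/- For indicator variables X_i of events {M_i ⊆ G(n,p)} where each M_i is an ℓ-matching, and Y_i = X_i - p^ℓ, for any finite index set I we have |E(∏_{i∈I} Y_i)| ≤ 2^{|I|} · p^{|∪_{i∈I} M_i|}, where |∪_{i∈I} M_i| denotes the number of edges in the union. -/
open Finset Nat

/-- A matching in `K_n`: a set of non-loop edges that are pairwise vertex-disjoint. -/
def IsMatching {n : ℕ} (M : Finset (Sym2 (Fin n))) : Prop :=
  (∀ e ∈ M, ¬ e.IsDiag) ∧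
    ∀ e ∈ M, ∀ f ∈ M, e ≠ f → ∀ v : Fin n, v ∈ e → v ∉ f

/-- The edge set of the complete graph on `n` vertices. -/
def edgeSet (n : ℕ) : Finset (Sym2 (Fin n)) :=
  Finset.univ.filter fun e => ¬ e.IsDiag

/-- The probability of a particular graph `G ⊆ E(K_n)` in `G(n,p)`. -/
noncomputable def erWeight (n : ℕ) (p : ℝ) (G : Finset (Sym2 (Fin n))) : ℝ :=
  p ^ G.card * (1 - p) ^ ((edgeSet n).card - G.card)

/-- Expectation of a function of the random graph `G(n,p)`. -/
noncomputable def erExp (n : ℕ) (p : ℝ) (f : Finset (Sym2 (Fin n)) → ℝ) : ℝ :=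
  ∑ G ∈ (edgeSet n).powerset, erWeight n p G * f G

/-- The centred indicator `Y = 1[M ⊆ G(n,p)] - p^ℓ` of an `ℓ`-matching `M`. -/
noncomputable def Yc (n ℓ : ℕ) (p : ℝ) (M G : Finset (Sym2 (Fin n))) : ℝ :=
  (if M ⊆ G then (1 : ℝ) else 0) - p ^ ℓ

lemma erExp_ind (n : ℕ) (p : ℝ) (S : Finset (Sym2 (Fin n))) (hS : S ⊆ edgeSet n) :
    erExp n p (fun G => if S ⊆ G then 1 else 0) = p ^ S.card := by
  unfold erExp erWeight
  have h1 : ∀ G : Finset (Sym2 (Fin n)),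
      p ^ G.card * (1 - p) ^ ((edgeSet n).card - G.card) * (if S ⊆ G then (1:ℝ) else 0)
      = if S ⊆ G then p ^ G.card * (1 - p) ^ ((edgeSet n).card - G.card) else 0 := by
    intro G; split <;> simp
  simp only [h1]
  rw [← Finset.sum_filter]
  rw [Finset.sum_bij' (i := fun (G : Finset (Sym2 (Fin n))) _ => G \ S)
      (j := fun (H : Finset (Sym2 (Fin n))) _ => S ∪ H)
      (t := ((edgeSet n) \ S).powerset)
      (g := fun H => p ^ (S ∪ H).card * (1 - p) ^ ((edgeSet n).card - (S ∪ H).card))]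
  · have key : ∀ H ∈ ((edgeSet n) \ S).powerset,
        p ^ (S ∪ H).card * (1 - p) ^ ((edgeSet n).card - (S ∪ H).card)
        = p ^ S.card * (p ^ H.card * (1 - p) ^ (((edgeSet n) \ S).card - H.card)) := by
      intro H hH
      simp only [mem_powerset] at hH
      have hd : Disjoint S H := Finset.disjoint_of_subset_right hH Finset.disjoint_sdiff
      rw [Finset.card_union_of_disjoint hd, pow_add, Finset.card_sdiff_of_subset hS, Nat.sub_sub]
      ring
    rw [Finset.sum_congr rfl key, ← Finset.mul_sum]
    have hone : ∑ H ∈ ((edgeSet n) \ S).powerset,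
        p ^ H.card * (1 - p) ^ (((edgeSet n) \ S).card - H.card) = 1 := by
      have hpa := Finset.prod_add (fun _ : Sym2 (Fin n) => p) (fun _ => 1 - p) ((edgeSet n) \ S)
      simp only [add_sub_cancel, Finset.prod_const, one_pow] at hpa
      rw [Finset.sum_congr rfl (fun t ht => ?_)] at hpa
      · exact hpa.symm
      · simp only [mem_powerset] at ht
        rw [Finset.card_sdiff_of_subset ht]
    rw [hone, mul_one]
  · intro G hG
    simp only [mem_filter, mem_powerset] at hG
    simp only [mem_powerset]
    exact sdiff_subset_sdiff hG.1 (le_refl S)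
  · intro H hH
    simp only [mem_powerset] at hH
    simp only [mem_filter, mem_powerset]
    exact ⟨union_subset hS (hH.trans sdiff_subset), subset_union_left⟩
  · intro G hG
    simp only [mem_filter, mem_powerset] at hG
    exact Finset.union_sdiff_of_subset hG.2
  · intro H hH
    simp only [mem_powerset] at hH
    exact Finset.union_sdiff_cancel_left
      (Finset.disjoint_of_subset_right hH Finset.disjoint_sdiff)
  · intro G hG
    simp only [mem_filter, mem_powerset] at hG
    rw [Finset.union_sdiff_of_subset hG.2]

/-- For `ℓ`-matchings `M i` and centred indicators `Y_i = 1[M_i ⊆ G(n,p)] - p^ℓ`,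
for any finite index set `I`, `|E(∏_{i∈I} Y_i)| ≤ 2^{|I|} ⬝ p^{|⋃_{i∈I} M_i|}`. -/
theorem abs_expectation_prod_le (n ℓ k : ℕ) (p : ℝ) (hp0 : 0 ≤ p) (hp1 : p ≤ 1)
    (M : Fin k → Finset (Sym2 (Fin n)))
    (hM : ∀ i, IsMatching (M i) ∧ (M i).card = ℓ)
    (I : Finset (Fin k)) :
    |erExp n p (fun G => ∏ i ∈ I, Yc n ℓ p (M i) G)| ≤
      2 ^ I.card * p ^ (I.sup M).card := by
  classical
  have hMsub : ∀ i, M i ⊆ edgeSet n := by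
    intro i e he
    simp only [edgeSet, mem_filter, mem_univ, true_and]
    exact (hM i).1.1 e he
  -- expansion of the product
  have hexpand : ∀ G : Finset (Sym2 (Fin n)),
      ∏ i ∈ I, Yc n ℓ p (M i) G
      = ∑ t ∈ I.powerset,
          (if t.sup M ⊆ G then (1:ℝ) else 0) * (-(p ^ ℓ)) ^ (I \ t).card := by
    intro G
    have hpa := Finset.prod_add (fun i => if M i ⊆ G then (1:ℝ) else 0)
      (fun _ => -(p ^ ℓ)) I
    simp only [Yc, sub_eq_add_neg]
    rw [hpa]
    refine Finset.sum_congr rfl fun t ht => ?_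
    rw [Finset.prod_const, Finset.prod_boole]
    congr 1
    simp only [eq_iff_iff, ← Finset.le_eq_subset, Finset.sup_le_iff]
    congr 1
  have hlin : erExp n p (fun G => ∏ i ∈ I, Yc n ℓ p (M i) G)
      = ∑ t ∈ I.powerset, p ^ (t.sup M).card * (-(p ^ ℓ)) ^ (I \ t).card := by
    unfold erExp
    simp only [hexpand, Finset.mul_sum]
    rw [Finset.sum_comm]
    refine Finset.sum_congr rfl fun t ht => ?_
    simp only [mem_powerset] at ht
    have hsub : t.sup M ⊆ edgeSet n := by
      rw [Finset.sup_eq_biUnion]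
      exact Finset.biUnion_subset.mpr fun i _ => hMsub i
    have := erExp_ind n p (t.sup M) hsub
    unfold erExp at this
    calc ∑ G ∈ (edgeSet n).powerset,
          erWeight n p G * ((if t.sup M ⊆ G then (1:ℝ) else 0) * (-(p ^ ℓ)) ^ (I \ t).card)
        = (∑ G ∈ (edgeSet n).powerset,
            erWeight n p G * (if t.sup M ⊆ G then (1:ℝ) else 0)) * (-(p ^ ℓ)) ^ (I \ t).card := by
          rw [Finset.sum_mul]; exact Finset.sum_congr rfl fun G _ => by ring
      _ = p ^ (t.sup M).card * (-(p ^ ℓ)) ^ (I \ t).card := by rw [this]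
  rw [hlin]
  -- cardinality inequality
  have hcard : ∀ t ∈ I.powerset,
      (I.sup M).card ≤ (t.sup M).card + ℓ * (I \ t).card := by
    intro t ht
    simp only [mem_powerset] at ht
    have hsup : I.sup M = t.sup M ∪ (I \ t).sup M := by
      rw [← Finset.sup_eq_union, ← Finset.sup_union, Finset.union_sdiff_of_subset ht]
    rw [hsup]
    refine (Finset.card_union_le _ _).trans (Nat.add_le_add_left ?_ _)
    rw [Finset.sup_eq_biUnion]
    refine (Finset.card_biUnion_le).trans ?_
    calc ∑ i ∈ I \ t, (M i).card = ∑ _i ∈ I \ t, ℓ :=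
          Finset.sum_congr rfl fun i _ => (hM i).2
      _ = ℓ * (I \ t).card := by rw [Finset.sum_const, smul_eq_mul, mul_comm]
      _ ≤ ℓ * (I \ t).card := le_rfl
  calc |∑ t ∈ I.powerset, p ^ (t.sup M).card * (-(p ^ ℓ)) ^ (I \ t).card|
      ≤ ∑ t ∈ I.powerset, |p ^ (t.sup M).card * (-(p ^ ℓ)) ^ (I \ t).card| :=
        Finset.abs_sum_le_sum_abs _ _
    _ ≤ ∑ _t ∈ I.powerset, p ^ (I.sup M).card := by
        refine Finset.sum_le_sum fun t ht => ?_
        rw [abs_mul, abs_pow, abs_pow, abs_neg, abs_of_nonneg hp0,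
          abs_of_nonneg (pow_nonneg hp0 _), ← pow_mul, ← pow_add]
        exact pow_le_pow_of_le_one hp0 hp1 (hcard t ht)
    _ = 2 ^ I.card * p ^ (I.sup M).card := by
        rw [Finset.sum_const, Finset.card_powerset, nsmul_eq_mul]
        push_cast
        ring
end

section
/- Define σ̄² = ℓ · C(n,2ℓ) · C(n-2,2ℓ-2) · (2ℓ-1)!! · (2ℓ-3)!! · (p^{2ℓ-1} - p^{2ℓ}). If 1-p = Ω(1) and ℓ = o(n√p), then the variance of the number X_{n,ℓ} of ℓ-matchings in G(n,p) satisfies Var(X_{n,ℓ}) ~ σ̄². -/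
open Finset Nat

/-- Number of `ℓ`-matchings contained in a graph `G`. -/
noncomputable def matchCount (n ℓ : ℕ) (G : Finset (Sym2 (Fin n))) : ℝ :=
  Nat.card {M : Finset (Sym2 (Fin n)) // IsMatching M ∧ M.card = ℓ ∧ M ⊆ G}

/-- Variance of the number of `ℓ`-matchings in `G(n,p)`. -/
noncomputable def erVar (n ℓ : ℕ) (p : ℝ) : ℝ :=
  erExp n p (fun G => (matchCount n ℓ G - erExp n p (matchCount n ℓ)) ^ 2)

/-- The quantity `σ̄² = ℓ C(n,2ℓ) C(n-2,2ℓ-2) (2ℓ-1)‼ (2ℓ-3)‼ (p^{2ℓ-1} - p^{2ℓ})`. -/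
noncomputable def sigmaBarSq (n ℓ : ℕ) (p : ℝ) : ℝ :=
  (ℓ : ℝ) * n.choose (2 * ℓ) * (n - 2).choose (2 * ℓ - 2) *
    (2 * ℓ - 1)‼ * (2 * ℓ - 3)‼ * (p ^ (2 * ℓ - 1) - p ^ (2 * ℓ))

open scoped Classical in
noncomputable def matchings (n k : ℕ) (A : Finset (Fin n)) : Finset (Finset (Sym2 (Fin n))) :=
  (edgeSet n).powerset.filter fun M => IsMatching M ∧ M.card = k ∧ ∀ e ∈ M, ∀ v ∈ e, v ∈ A

lemma isMatching_subset {n : ℕ} {M M' : Finset (Sym2 (Fin n))} (h : M' ⊆ M)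
    (hM : IsMatching M) : IsMatching M' :=
  ⟨fun e he => hM.1 e (h he), fun e he f hf hef v hv => hM.2 e (h he) f (h hf) hef v hv⟩

lemma mem_matchings {n k : ℕ} {A : Finset (Fin n)} {M : Finset (Sym2 (Fin n))} :
    M ∈ matchings n k A ↔ IsMatching M ∧ M.card = k ∧ ∀ e ∈ M, ∀ v ∈ e, v ∈ A := by
  classical
  simp only [matchings, mem_filter, mem_powerset, and_iff_right_iff_imp]
  rintro ⟨hm, -, -⟩ e he
  simp [edgeSet, hm.1 e he]

lemma doubleFactorial_odd_succ (k : ℕ) : (2*k+1)‼ = (2*k+1) * (2*k-1)‼ := by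
  cases k with
  | zero => rfl
  | succ j =>
    rw [show 2*(j+1)-1 = 2*j+1 from rfl, show 2*(j+1)+1 = (2*j+1)+2 from rfl,
      Nat.doubleFactorial]

lemma match_arith (b k : ℕ) :
    b.choose (2*(k+1)) * (2*(k+1)-1)‼ + b * ((b-1).choose (2*k) * (2*k-1)‼)
      = (b+1).choose (2*(k+1)) * (2*(k+1)-1)‼ := by
  have h2 : 2*(k+1)-1 = 2*k+1 := by omega
  have h1 : 2*(k+1) = (2*k+1)+1 := by omega
  rw [h2, h1, Nat.choose_succ_succ b (2*k+1), add_mul]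
  have key : b * (b-1).choose (2*k) = b.choose (2*k+1) * (2*k+1) := by
    cases b with
    | zero => simp
    | succ c => simpa using Nat.add_one_mul_choose_eq c (2*k)
  calc b.choose ((2*k+1)+1) * (2*k+1)‼ + b * ((b-1).choose (2*k) * (2*k-1)‼)
      = b.choose ((2*k+1)+1) * (2*k+1)‼ + (b * (b-1).choose (2*k)) * (2*k-1)‼ := by ring
    _ = b.choose ((2*k+1)+1) * (2*k+1)‼ + b.choose (2*k+1) * ((2*k+1) * (2*k-1)‼) := by
        rw [key]; ring
    _ = b.choose (2*k+1) * (2*k+1)‼ + b.choose ((2*k+1)+1) * (2*k+1)‼ := by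
        rw [← doubleFactorial_odd_succ]; ring

theorem card_matchings (n k : ℕ) (A : Finset (Fin n)) :
    (matchings n k A).card = (A.card.choose (2*k)) * (2*k-1)‼ := by
  classical
  suffices H : ∀ a (k : ℕ) (A : Finset (Fin n)), A.card = a →
      (matchings n k A).card = (A.card.choose (2*k)) * (2*k-1)‼ from H A.card k A rfl
  intro a
  induction a using Nat.strong_induction_on with
  | _ a IH =>
  intro k A hcard
  subst hcard
  cases k with
  | zero =>
    have : matchings n 0 A = {∅} := by
      ext M
      simp only [mem_matchings, mem_singleton, Finset.card_eq_zero]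
      constructor
      · rintro ⟨-, h, -⟩; exact h
      · rintro rfl
        exact ⟨⟨fun e he => absurd he (Finset.notMem_empty e),
          fun e he => absurd he (Finset.notMem_empty e)⟩, rfl,
          fun e he => absurd he (Finset.notMem_empty e)⟩
    simp [this]
  | succ k =>
  rcases A.eq_empty_or_nonempty with rfl | ⟨v, hv⟩
  · have hemp : matchings n (k+1) (∅ : Finset (Fin n)) = ∅ := by
      ext M
      simp only [mem_matchings, Finset.notMem_empty, iff_false, not_and]
      intro hM hcard
      have : M.Nonempty := Finset.card_pos.mp (by omega)
      obtain ⟨e, he⟩ := this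
      intro hverts
      exact (hverts e he e.out.1 (Sym2.out_fst_mem e)).elim
    have hch : Nat.choose 0 (2*(k+1)) = 0 := Nat.choose_eq_zero_of_lt (by omega)
    simp [hemp, hch]
  · set B := A.erase v with hB
    have hvB : v ∉ B := Finset.notMem_erase v A
    have hBcard : B.card = A.card - 1 := Finset.card_erase_of_mem hv
    have hApos : 0 < A.card := Finset.card_pos.mpr ⟨v, hv⟩
    -- split
    have hsplit : (matchings n (k+1) A).card =
        ((matchings n (k+1) A).filter (fun M => ∀ e ∈ M, v ∉ e)).card +
        ((matchings n (k+1) A).filter (fun M => ¬ ∀ e ∈ M, v ∉ e)).card :=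
      (Finset.card_filter_add_card_filter_not _).symm
    -- claim 1
    have hclaim1 : (matchings n (k+1) A).filter (fun M => ∀ e ∈ M, v ∉ e)
        = matchings n (k+1) B := by
      ext M
      simp only [mem_filter, mem_matchings]
      constructor
      · rintro ⟨⟨hm, hc, hverts⟩, hnv⟩
        refine ⟨hm, hc, fun e he u hu => Finset.mem_erase.mpr ⟨?_, hverts e he u hu⟩⟩
        rintro rfl; exact hnv e he hu
      · rintro ⟨hm, hc, hverts⟩
        refine ⟨⟨hm, hc, fun e he u hu => Finset.mem_of_mem_erase (hverts e he u hu)⟩,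
          fun e he hve => hvB (hverts e he v hve)⟩
    -- claim 2
    have hclaim2 : (matchings n (k+1) A).filter (fun M => ¬ ∀ e ∈ M, v ∉ e)
        = B.biUnion (fun w => (matchings n k (B.erase w)).image (insert s(v,w))) := by
      ext M
      simp only [mem_filter, Finset.mem_biUnion, Finset.mem_image]
      constructor
      · rintro ⟨hM, huse⟩
        push_neg at huse
        obtain ⟨e, he, hve⟩ := huse
        obtain ⟨hm, hc, hverts⟩ := mem_matchings.mp hM
        obtain ⟨w, rfl⟩ := Sym2.mem_iff_exists.mp hve
        have hwv : w ≠ v := by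
          intro h; subst h; exact hm.1 _ he (Sym2.mk_isDiag_iff.mpr rfl)
        have hwB : w ∈ B := Finset.mem_erase.mpr ⟨hwv, hverts _ he w (Sym2.mem_mk_right v w)⟩
        refine ⟨w, hwB, M.erase s(v,w), ?_, Finset.insert_erase he⟩
        refine mem_matchings.mpr ⟨isMatching_subset (Finset.erase_subset _ _) hm, ?_, ?_⟩
        · rw [Finset.card_erase_of_mem he, hc]; omega
        · intro f hf u hu
          have hfM : f ∈ M := Finset.mem_of_mem_erase hf
          have hfe : f ≠ s(v,w) := Finset.ne_of_mem_erase hf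
          have huA : u ∈ A := hverts f hfM u hu
          have huv : u ≠ v := fun h =>
            hm.2 _ he f hfM hfe.symm v (Sym2.mem_mk_left v w) (h ▸ hu)
          have huw : u ≠ w := fun h =>
            hm.2 _ he f hfM hfe.symm w (Sym2.mem_mk_right v w) (h ▸ hu)
          exact Finset.mem_erase.mpr ⟨huw, Finset.mem_erase.mpr ⟨huv, huA⟩⟩
      · rintro ⟨w, hwB, M₁, hM₁, rfl⟩
        obtain ⟨hm₁, hc₁, hverts₁⟩ := mem_matchings.mp hM₁
        have hwv : w ≠ v := (Finset.mem_erase.mp hwB).1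
        have hwA : w ∈ A := Finset.mem_of_mem_erase hwB
        have hnovw : ∀ f ∈ M₁, ∀ u ∈ f, u ≠ v ∧ u ≠ w := by
          intro f hf u hu
          have := hverts₁ f hf u hu
          have h1 := Finset.mem_erase.mp this
          have h2 := Finset.mem_erase.mp h1.2
          exact ⟨h2.1, h1.1⟩
        have henot : s(v,w) ∉ M₁ := by
          intro h
          exact ((hnovw _ h v (Sym2.mem_mk_left v w)).1 rfl).elim
        constructor
        · refine mem_matchings.mpr ⟨⟨?_, ?_⟩, ?_, ?_⟩
          · intro e he
            rcases Finset.mem_insert.mp he with rfl | he'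
            · exact fun hd => hwv.symm (Sym2.mk_isDiag_iff.mp hd)
            · exact hm₁.1 e he'
          · intro e he f hf hef u hue huf
            rcases Finset.mem_insert.mp he with rfl | he' <;>
              rcases Finset.mem_insert.mp hf with rfl | hf'
            · exact hef rfl
            · rcases Sym2.mem_iff.mp hue with h | h
              · exact (hnovw f hf' u huf).1 h
              · exact (hnovw f hf' u huf).2 h
            · rcases Sym2.mem_iff.mp huf with h | h
              · exact (hnovw e he' u hue).1 h
              · exact (hnovw e he' u hue).2 h
            · exact hm₁.2 e he' f hf' hef u hue huf
          · rw [Finset.card_insert_of_notMem henot, hc₁]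
          · intro e he u hu
            rcases Finset.mem_insert.mp he with rfl | he'
            · rcases Sym2.mem_iff.mp hu with rfl | rfl
              · exact hv
              · exact hwA
            · exact Finset.mem_of_mem_erase (Finset.mem_of_mem_erase (hverts₁ e he' u hu))
        · push_neg
          exact ⟨s(v,w), Finset.mem_insert_self _ _, Sym2.mem_mk_left v w⟩
    -- disjointness & image cards
    have hdisj : ∀ w₁ ∈ B, ∀ w₂ ∈ B, w₁ ≠ w₂ →
        Disjoint ((matchings n k (B.erase w₁)).image (insert s(v,w₁)))
          ((matchings n k (B.erase w₂)).image (insert s(v,w₂))) := by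
      intro w₁ h₁ w₂ h₂ hne
      rw [Finset.disjoint_left]
      rintro M hM1 hM2
      obtain ⟨M₁, hM₁, rfl⟩ := Finset.mem_image.mp hM1
      obtain ⟨M₂, hM₂, hEq⟩ := Finset.mem_image.mp hM2
      have : s(v, w₂) ∈ insert s(v,w₁) M₁ := hEq ▸ Finset.mem_insert_self _ _
      rcases Finset.mem_insert.mp this with h | h
      · exact hne (Sym2.congr_right.mp h.symm)
      · obtain ⟨-, -, hverts⟩ := mem_matchings.mp hM₁
        have := hverts _ h v (Sym2.mem_mk_left v w₂)
        exact hvB (Finset.mem_of_mem_erase this)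
    have himg : ∀ w ∈ B, ((matchings n k (B.erase w)).image (insert s(v,w))).card
        = (matchings n k (B.erase w)).card := by
      intro w hw
      apply Finset.card_image_of_injOn
      intro M₁ hM₁ M₂ hM₂ hEq
      have hnot : ∀ M ∈ matchings n k (B.erase w), s(v,w) ∉ M := by
        intro M hM hmem
        obtain ⟨-, -, hverts⟩ := mem_matchings.mp hM
        exact hvB (Finset.mem_of_mem_erase (hverts _ hmem v (Sym2.mem_mk_left v w)))
      have := congrArg (fun S => Finset.erase S s(v,w)) hEq
      simpa [Finset.erase_insert (hnot M₁ hM₁), Finset.erase_insert (hnot M₂ hM₂)] using this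
    -- assemble
    rw [hsplit, hclaim1, hclaim2, Finset.card_biUnion hdisj]
    rw [Finset.sum_congr rfl himg]
    have hIH1 : (matchings n (k+1) B).card = (B.card.choose (2*(k+1))) * (2*(k+1)-1)‼ :=
      IH B.card (by omega) (k+1) B rfl
    have hIH2 : ∀ w ∈ B, (matchings n k (B.erase w)).card
        = ((A.card - 2).choose (2*k)) * (2*k-1)‼ := by
      intro w hw
      have hcd : (B.erase w).card = A.card - 2 := by
        rw [Finset.card_erase_of_mem hw, hBcard]; omega
      rw [IH (B.erase w).card (by omega) k (B.erase w) rfl, hcd]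
    rw [Finset.sum_congr rfl hIH2, Finset.sum_const, smul_eq_mul, hIH1, hBcard]
    obtain ⟨b, hb⟩ : ∃ b, A.card = b + 1 := ⟨A.card - 1, by omega⟩
    rw [hb, show b + 1 - 1 = b from rfl, show b + 1 - 2 = b - 1 by omega]
    exact match_arith b k

-- new material
noncomputable def mverts {n : ℕ} (S : Finset (Sym2 (Fin n))) : Finset (Fin n) :=
  S.biUnion fun e => Finset.univ.filter (· ∈ e)

lemma mem_mverts {n : ℕ} {S : Finset (Sym2 (Fin n))} {v : Fin n} :
    v ∈ mverts S ↔ ∃ e ∈ S, v ∈ e := by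
  simp [mverts]

lemma card_mverts {n : ℕ} {S : Finset (Sym2 (Fin n))} (hS : IsMatching S) :
    (mverts S).card = 2 * S.card := by
  classical
  rw [mverts, Finset.card_biUnion]
  · rw [Finset.sum_congr rfl (g := fun _ => 2), Finset.sum_const, smul_eq_mul, mul_comm]
    intro e he
    induction e with
    | _ a b =>
      have hab : a ≠ b := fun h => hS.1 _ he (Sym2.mk_isDiag_iff.mpr h)
      rw [show Finset.univ.filter (· ∈ s(a,b)) = {a, b} by ext u; simp [Sym2.mem_iff]]
      rw [Finset.card_insert_of_notMem (by simp [hab]), Finset.card_singleton]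
  · intro e he f hf hef
    rw [Function.onFun, Finset.disjoint_left]
    intro u hu hu'
    simp only [Finset.mem_filter, Finset.mem_univ, true_and] at hu hu'
    exact hS.2 e he f hf hef u hu hu'

theorem card_matchings_superset {n ℓ s : ℕ} (S : Finset (Sym2 (Fin n)))
    (hS : S ∈ matchings n s Finset.univ) (hsl : s ≤ ℓ) :
    ((matchings n ℓ Finset.univ).filter (fun M => S ⊆ M)).card
      = ((n - 2*s).choose (2*(ℓ-s))) * (2*(ℓ-s)-1)‼ := by
  classical
  obtain ⟨hSm, hScard, -⟩ := mem_matchings.mp hS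
  have hAcard : (Finset.univ \ mverts S).card = n - 2*s := by
    rw [Finset.card_sdiff_of_subset (Finset.subset_univ _), card_mverts hSm, hScard, Finset.card_univ,
      Fintype.card_fin]
  rw [← hAcard, ← card_matchings n (ℓ - s) (Finset.univ \ mverts S)]
  apply Finset.card_bij' (fun M _ => M \ S) (fun M' _ => M' ∪ S)
  · -- hi
    rintro M hM
    rw [Finset.mem_filter] at hM
    obtain ⟨hMm, hMcard, -⟩ := mem_matchings.mp hM.1
    have hSM := hM.2
    refine mem_matchings.mpr ⟨isMatching_subset (Finset.sdiff_subset) hMm, ?_, ?_⟩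
    · rw [Finset.card_sdiff_of_subset hSM, hMcard, hScard]
    · intro e he u hu
      rw [Finset.mem_sdiff] at he
      refine Finset.mem_sdiff.mpr ⟨Finset.mem_univ u, ?_⟩
      intro huS
      obtain ⟨f, hf, huf⟩ := mem_mverts.mp huS
      exact hMm.2 e he.1 f (hSM hf) (fun h => he.2 (h ▸ hf)) u hu huf
  · -- hj
    rintro M' hM'
    obtain ⟨hM'm, hM'card, hM'verts⟩ := mem_matchings.mp hM'
    have hdisj : Disjoint M' S := by
      rw [Finset.disjoint_left]
      intro e heM' heS
      have hu : e.out.1 ∈ e := Sym2.out_fst_mem e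
      have := hM'verts e heM' e.out.1 hu
      rw [Finset.mem_sdiff] at this
      exact this.2 (mem_mverts.mpr ⟨e, heS, hu⟩)
    have hcross : ∀ e ∈ M', ∀ u ∈ e, u ∉ mverts S := by
      intro e he u hu
      have := hM'verts e he u hu
      rw [Finset.mem_sdiff] at this
      exact this.2
    rw [Finset.mem_filter]
    constructor
    · refine mem_matchings.mpr ⟨⟨?_, ?_⟩, ?_, fun e _ u _ => Finset.mem_univ u⟩
      · intro e he
        rcases Finset.mem_union.mp he with h | h
        · exact hM'm.1 e h
        · exact hSm.1 e h
      · intro e he f hf hef u hue huf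
        rcases Finset.mem_union.mp he with h1 | h1 <;> rcases Finset.mem_union.mp hf with h2 | h2
        · exact hM'm.2 e h1 f h2 hef u hue huf
        · exact hcross e h1 u hue (mem_mverts.mpr ⟨f, h2, huf⟩)
        · exact hcross f h2 u huf (mem_mverts.mpr ⟨e, h1, hue⟩)
        · exact hSm.2 e h1 f h2 hef u hue huf
      · rw [Finset.card_union_of_disjoint hdisj, hM'card, hScard]; omega
    · exact Finset.subset_union_right
  · -- left inverse
    rintro M hM
    rw [Finset.mem_filter] at hM
    exact Finset.sdiff_union_of_subset hM.2
  · -- right inverse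
    rintro M' hM'
    obtain ⟨hM'm, hM'card, hM'verts⟩ := mem_matchings.mp hM'
    have hdisj : Disjoint M' S := by
      rw [Finset.disjoint_left]
      intro e heM' heS
      have hu : e.out.1 ∈ e := Sym2.out_fst_mem e
      have := hM'verts e heM' e.out.1 hu
      rw [Finset.mem_sdiff] at this
      exact this.2 (mem_mverts.mpr ⟨e, heS, hu⟩)
    rw [Finset.union_sdiff_cancel_right hdisj]

-- new
lemma binom_sum {α : Type*} [DecidableEq α] (q r : ℝ) (s : Finset α) :
    ∑ t ∈ s.powerset, q ^ t.card * r ^ (s.card - t.card) = (q + r) ^ s.card := by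
  rw [← Finset.prod_const (b := q + r), Finset.prod_add]
  apply Finset.sum_congr rfl
  intro t ht
  rw [Finset.prod_const, Finset.prod_const,
    Finset.card_sdiff_of_subset (Finset.mem_powerset.mp ht)]

lemma sum_weight_ind (n : ℕ) (p : ℝ) (S : Finset (Sym2 (Fin n))) (hS : S ⊆ edgeSet n) :
    ∑ G ∈ (edgeSet n).powerset, erWeight n p G * (if S ⊆ G then (1:ℝ) else 0)
      = p ^ S.card := by
  classical
  have h1 : ∀ G ∈ (edgeSet n).powerset,
      erWeight n p G * (if S ⊆ G then (1:ℝ) else 0)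
        = if S ⊆ G then erWeight n p G else 0 := by
    intro G _; split_ifs <;> ring
  rw [Finset.sum_congr rfl h1, ← Finset.sum_filter]
  have key : ∑ G ∈ ((edgeSet n).powerset.filter (fun G => S ⊆ G)), erWeight n p G
      = ∑ H ∈ (edgeSet n \ S).powerset,
          p ^ S.card * (p ^ H.card * (1-p) ^ ((edgeSet n \ S).card - H.card)) := by
    apply Finset.sum_bij' (fun G _ => G \ S) (fun H _ => H ∪ S)
    · intro G hG
      rw [Finset.mem_filter, Finset.mem_powerset] at hG
      rw [Finset.mem_powerset]
      exact Finset.sdiff_subset_sdiff hG.1 le_rfl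
    · intro H hH
      rw [Finset.mem_powerset] at hH
      rw [Finset.mem_filter, Finset.mem_powerset]
      constructor
      · exact Finset.union_subset (hH.trans Finset.sdiff_subset) hS
      · exact Finset.subset_union_right
    · intro G hG
      rw [Finset.mem_filter] at hG
      exact Finset.sdiff_union_of_subset hG.2
    · intro H hH
      rw [Finset.mem_powerset] at hH
      apply Finset.union_sdiff_cancel_right
      exact Finset.disjoint_left.mpr fun e he hes => (Finset.mem_sdiff.mp (hH he)).2 hes
    · intro G hG
      rw [Finset.mem_filter, Finset.mem_powerset] at hG
      obtain ⟨hGE, hSG⟩ := hG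
      have hc1 : (G \ S).card = G.card - S.card := Finset.card_sdiff_of_subset hSG
      have hc2 : (edgeSet n \ S).card = (edgeSet n).card - S.card :=
        Finset.card_sdiff_of_subset hS
      have hSc : S.card ≤ G.card := Finset.card_le_card hSG
      have hGc : G.card ≤ (edgeSet n).card := Finset.card_le_card hGE
      rw [erWeight, hc1, hc2]
      rw [show (edgeSet n).card - S.card - (G.card - S.card) = (edgeSet n).card - G.card
        by omega]
      rw [← mul_assoc, ← pow_add]
      rw [show S.card + (G.card - S.card) = G.card by omega]
  rw [key, ← Finset.mul_sum, binom_sum]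
  simp

lemma sum_weight (n : ℕ) (p : ℝ) :
    ∑ G ∈ (edgeSet n).powerset, erWeight n p G = 1 := by
  have := sum_weight_ind n p ∅ (Finset.empty_subset _)
  simpa using this

lemma matchCount_eq (n ℓ : ℕ) (G : Finset (Sym2 (Fin n))) :
    matchCount n ℓ G = ∑ M ∈ matchings n ℓ Finset.univ, (if M ⊆ G then (1:ℝ) else 0) := by
  classical
  rw [matchCount, Nat.card_eq_fintype_card, Fintype.card_subtype, Finset.sum_boole]
  congr 2
  ext M
  simp only [Finset.mem_filter, Finset.mem_univ, true_and, mem_matchings]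
  constructor
  · rintro ⟨hm, hc, hG⟩; exact ⟨⟨hm, hc, fun _ _ u _ => trivial⟩, hG⟩
  · rintro ⟨⟨hm, hc, -⟩, hG⟩; exact ⟨hm, hc, hG⟩

lemma erExp_matchCount (n ℓ : ℕ) (p : ℝ) :
    erExp n p (matchCount n ℓ) = ((matchings n ℓ Finset.univ).card : ℝ) * p ^ ℓ := by
  classical
  rw [erExp]
  have h1 : ∀ G ∈ (edgeSet n).powerset, erWeight n p G * matchCount n ℓ G
      = ∑ M ∈ matchings n ℓ Finset.univ, erWeight n p G * (if M ⊆ G then (1:ℝ) else 0) := by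
    intro G _; rw [matchCount_eq, Finset.mul_sum]
  rw [Finset.sum_congr rfl h1, Finset.sum_comm]
  have h2 : ∀ M ∈ matchings n ℓ Finset.univ,
      ∑ G ∈ (edgeSet n).powerset, erWeight n p G * (if M ⊆ G then (1:ℝ) else 0)
        = p ^ ℓ := by
    intro M hM
    obtain ⟨hm, hc, -⟩ := mem_matchings.mp hM
    have hME : M ⊆ edgeSet n := by
      intro e he; simp [edgeSet, hm.1 e he]
    rw [sum_weight_ind n p M hME, hc]
  rw [Finset.sum_congr rfl h2, Finset.sum_const, nsmul_eq_mul]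

lemma erExp_matchCount_sq (n ℓ : ℕ) (p : ℝ) :
    erExp n p (fun G => matchCount n ℓ G ^ 2)
      = ∑ x ∈ (matchings n ℓ Finset.univ) ×ˢ (matchings n ℓ Finset.univ),
          p ^ (x.1 ∪ x.2).card := by
  classical
  rw [erExp]
  have h1 : ∀ G ∈ (edgeSet n).powerset, erWeight n p G * matchCount n ℓ G ^ 2
      = ∑ x ∈ (matchings n ℓ Finset.univ) ×ˢ (matchings n ℓ Finset.univ),
          erWeight n p G * (if x.1 ∪ x.2 ⊆ G then (1:ℝ) else 0) := by
    intro G _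
    rw [matchCount_eq, sq, Finset.sum_mul_sum, ← Finset.sum_product', Finset.mul_sum]
    apply Finset.sum_congr rfl
    intro x _
    congr 1
    by_cases h1 : x.1 ⊆ G <;> by_cases h2 : x.2 ⊆ G <;>
      simp [h1, h2, Finset.union_subset_iff]
  rw [Finset.sum_congr rfl h1, Finset.sum_comm]
  apply Finset.sum_congr rfl
  intro x hx
  rw [Finset.mem_product] at hx
  obtain ⟨hm1, -, -⟩ := mem_matchings.mp hx.1
  obtain ⟨hm2, -, -⟩ := mem_matchings.mp hx.2
  have hE : x.1 ∪ x.2 ⊆ edgeSet n := by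
    intro e he
    rcases Finset.mem_union.mp he with h | h
    · simp [edgeSet, hm1.1 e h]
    · simp [edgeSet, hm2.1 e h]
  exact sum_weight_ind n p _ hE

lemma erVar_eq (n ℓ : ℕ) (p : ℝ) :
    erVar n ℓ p = ∑ x ∈ (matchings n ℓ Finset.univ) ×ˢ (matchings n ℓ Finset.univ),
      (p ^ (x.1 ∪ x.2).card - p ^ ℓ * p ^ ℓ) := by
  classical
  set c := erExp n p (matchCount n ℓ) with hc
  have expand : erVar n ℓ p = erExp n p (fun G => matchCount n ℓ G ^ 2) - c ^ 2 := by
    rw [erVar, erExp]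
    have : ∀ G ∈ (edgeSet n).powerset,
        erWeight n p G * (matchCount n ℓ G - c) ^ 2
          = erWeight n p G * (matchCount n ℓ G ^ 2)
            - 2 * c * (erWeight n p G * matchCount n ℓ G) + c ^ 2 * erWeight n p G := by
      intro G _; ring
    rw [Finset.sum_congr rfl this]
    rw [Finset.sum_add_distrib, Finset.sum_sub_distrib, ← Finset.mul_sum, ← Finset.mul_sum,
      sum_weight]
    rw [show (∑ G ∈ (edgeSet n).powerset, erWeight n p G * matchCount n ℓ G) = c from rfl]
    rw [erExp]
    ring
  rw [expand, erExp_matchCount_sq, hc, erExp_matchCount, Finset.sum_sub_distrib]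
  congr 1
  rw [Finset.sum_const, nsmul_eq_mul, Finset.card_product]
  push_cast
  ring

-- ====== remaining skeleton ======
lemma singleton_matching {n : ℕ} {e : Sym2 (Fin n)} (he : ¬ e.IsDiag) :
    ({e} : Finset (Sym2 (Fin n))) ∈ matchings n 1 Finset.univ := by
  refine mem_matchings.mpr ⟨⟨?_, ?_⟩, Finset.card_singleton e, fun _ _ u _ => Finset.mem_univ u⟩
  · intro f hf; rw [Finset.mem_singleton] at hf; subst hf; exact he
  · intro f hf g hg hfg
    rw [Finset.mem_singleton] at hf hg; subst hf; subst hg; exact absurd rfl hfg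

lemma count_contains (n ℓ : ℕ) (hl : 1 ≤ ℓ) {e : Sym2 (Fin n)} (he : ¬ e.IsDiag) :
    ((matchings n ℓ Finset.univ).filter (fun M' => e ∈ M')).card
      = (n - 2).choose (2*(ℓ-1)) * (2*(ℓ-1)-1)‼ := by
  classical
  have h := card_matchings_superset {e} (singleton_matching he) hl
  simp only [Finset.singleton_subset_iff] at h
  rw [show n - 2*1 = n-2 by omega] at h
  exact h

lemma T1_eq (n ℓ : ℕ) (hl : 1 ≤ ℓ) :
    ∑ x ∈ (matchings n ℓ Finset.univ) ×ˢ (matchings n ℓ Finset.univ), (x.1 ∩ x.2).card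
      = (matchings n ℓ Finset.univ).card *
        (ℓ * ((n - 2).choose (2*(ℓ-1)) * (2*(ℓ-1)-1)‼)) := by
  classical
  rw [Finset.sum_product]
  have inner : ∀ M ∈ matchings n ℓ Finset.univ,
      ∑ M' ∈ matchings n ℓ Finset.univ, (M ∩ M').card
        = ℓ * ((n-2).choose (2*(ℓ-1)) * (2*(ℓ-1)-1)‼) := by
    intro M hM
    obtain ⟨hm, hc, -⟩ := mem_matchings.mp hM
    have h1 : ∀ M' ∈ matchings n ℓ Finset.univ,
        (M ∩ M').card = ∑ e ∈ M, if e ∈ M' then 1 else 0 := by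
      intro M' _
      have hf : M ∩ M' = M.filter (fun e => e ∈ M') := by
        ext f; simp [and_comm]
      rw [hf, Finset.card_filter]
    rw [Finset.sum_congr rfl h1, Finset.sum_comm]
    have h2 : ∀ e ∈ M, (∑ M' ∈ matchings n ℓ Finset.univ, if e ∈ M' then 1 else 0)
        = (n-2).choose (2*(ℓ-1)) * (2*(ℓ-1)-1)‼ := by
      intro e he
      rw [← Finset.card_filter]
      exact count_contains n ℓ hl (hm.1 e he)
    rw [Finset.sum_congr rfl h2, Finset.sum_const, smul_eq_mul, hc]
  rw [Finset.sum_congr rfl inner, Finset.sum_const, smul_eq_mul]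

lemma Nj_le (n ℓ j : ℕ) :
    (((matchings n ℓ Finset.univ) ×ˢ (matchings n ℓ Finset.univ)).filter
        (fun x => (x.1 ∩ x.2).card = j)).card
      ≤ (matchings n ℓ Finset.univ).card *
        (ℓ.choose j * ((n - 2*j).choose (2*(ℓ-j)) * (2*(ℓ-j)-1)‼)) := by
  classical
  rw [Finset.card_filter, Finset.sum_product]
  have inner : ∀ M ∈ matchings n ℓ Finset.univ,
      (∑ M' ∈ matchings n ℓ Finset.univ, if (M ∩ M').card = j then 1 else 0)
        ≤ ℓ.choose j * ((n - 2*j).choose (2*(ℓ-j)) * (2*(ℓ-j)-1)‼) := by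
    intro M hM
    obtain ⟨hm, hc, -⟩ := mem_matchings.mp hM
    rw [← Finset.card_filter]
    have hsub : (matchings n ℓ Finset.univ).filter (fun M' => (M ∩ M').card = j)
        ⊆ (M.powersetCard j).biUnion
            (fun S => (matchings n ℓ Finset.univ).filter (fun M' => S ⊆ M')) := by
      intro M' hM'
      rw [Finset.mem_filter] at hM'
      refine Finset.mem_biUnion.mpr ⟨M ∩ M', ?_, ?_⟩
      · exact Finset.mem_powersetCard.mpr ⟨Finset.inter_subset_left, hM'.2⟩
      · exact Finset.mem_filter.mpr ⟨hM'.1, Finset.inter_subset_right⟩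
    calc ((matchings n ℓ Finset.univ).filter (fun M' => (M ∩ M').card = j)).card
        ≤ ((M.powersetCard j).biUnion
            (fun S => (matchings n ℓ Finset.univ).filter (fun M' => S ⊆ M'))).card :=
          Finset.card_le_card hsub
      _ ≤ ∑ S ∈ M.powersetCard j,
            ((matchings n ℓ Finset.univ).filter (fun M' => S ⊆ M')).card :=
          Finset.card_biUnion_le
      _ = ∑ _S ∈ M.powersetCard j, ((n - 2*j).choose (2*(ℓ-j)) * (2*(ℓ-j)-1)‼) := by
          apply Finset.sum_congr rfl
          intro S hS
          obtain ⟨hSM, hScard⟩ := Finset.mem_powersetCard.mp hS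
          have hSmem : S ∈ matchings n j Finset.univ :=
            mem_matchings.mpr ⟨isMatching_subset hSM hm, hScard, fun _ _ u _ => Finset.mem_univ u⟩
          have hjl : j ≤ ℓ := by
            rw [← hScard, ← hc]; exact Finset.card_le_card hSM
          exact card_matchings_superset S hSmem hjl
      _ = ℓ.choose j * ((n - 2*j).choose (2*(ℓ-j)) * (2*(ℓ-j)-1)‼) := by
          rw [Finset.sum_const, Finset.card_powersetCard, hc, smul_eq_mul]
  calc (∑ M ∈ matchings n ℓ Finset.univ, ∑ M' ∈ matchings n ℓ Finset.univ,
          if (M ∩ M').card = j then 1 else 0)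
      ≤ ∑ _M ∈ matchings n ℓ Finset.univ,
          ℓ.choose j * ((n - 2*j).choose (2*(ℓ-j)) * (2*(ℓ-j)-1)‼) :=
        Finset.sum_le_sum inner
    _ = _ := by rw [Finset.sum_const, smul_eq_mul]

lemma choose_two_step (a m : ℕ) :
    a.choose (2*m+2) * ((2*m+2) * (2*m+1)) = a*(a-1) * ((a-2).choose (2*m)) := by
  match a with
  | 0 => rw [Nat.choose_eq_zero_of_lt (by omega)]; simp
  | 1 => rw [Nat.choose_eq_zero_of_lt (by omega)]; simp
  | (c+2) =>
    have h1 := Nat.add_one_mul_choose_eq (c+1) (2*m+1)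
    have h2 := Nat.add_one_mul_choose_eq c (2*m)
    calc (c+2).choose (2*m+2) * ((2*m+2) * (2*m+1))
        = ((c+2).choose (2*m+1+1) * (2*m+1+1)) * (2*m+1) := by ring_nf
      _ = ((c+1+1) * (c+1).choose (2*m+1)) * (2*m+1) := by rw [← h1]
      _ = (c+2) * ((c+1).choose (2*m+1) * (2*m+1)) := by ring
      _ = (c+2) * ((c+1) * c.choose (2*m)) := by rw [← h2]
      _ = (c+2)*((c+2)-1) * ((c+2)-2).choose (2*m) := by
          rw [show c+2-1 = c+1 from rfl, show c+2-2 = c from rfl]; ring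

lemma id2 (a k : ℕ) (hk : 1 ≤ k) :
    2*k * (a.choose (2*k) * (2*k-1)‼)
      = a*(a-1) * ((a-2).choose (2*k-2) * (2*k-3)‼) := by
  obtain ⟨m, rfl⟩ : ∃ m, k = m + 1 := ⟨k-1, by omega⟩
  rw [show 2*(m+1) = 2*m+2 by omega]
  rw [show 2*m+2-1 = 2*m+1 by omega, show 2*m+2-2 = 2*m by omega,
    show 2*m+2-3 = 2*m-1 by omega, doubleFactorial_odd_succ m]
  calc (2*m+2) * (a.choose (2*m+2) * ((2*m+1) * (2*m-1)‼))
      = (a.choose (2*m+2) * ((2*m+2) * (2*m+1))) * (2*m-1)‼ := by ring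
    _ = (a*(a-1) * ((a-2).choose (2*m))) * (2*m-1)‼ := by rw [choose_two_step]
    _ = a*(a-1) * ((a-2).choose (2*m) * (2*m-1)‼) := by ring

lemma t_rec (n ℓ j : ℕ) :
    (ℓ.choose (j+1) * ((n - 2*(j+1)).choose (2*(ℓ-(j+1))) * (2*(ℓ-(j+1))-1)‼))
        * ((j+1) * ((n-2*j) * (n-2*j-1)))
      = 2 * (ℓ-j)^2 * (ℓ.choose j * ((n - 2*j).choose (2*(ℓ-j)) * (2*(ℓ-j)-1)‼)) := by
  by_cases hjl : j < ℓ
  · set k := ℓ - j with hk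
    have hk1 : 1 ≤ k := by omega
    set a := n - 2*j with ha
    have e1 : ℓ - (j+1) = k - 1 := by omega
    have e2 : n - 2*(j+1) = a - 2 := by omega
    have e3 : 2*(k-1) = 2*k-2 := by omega
    have e4 : 2*k-2-1 = 2*k-3 := by omega
    have e5 : n - 2*j - 1 = a - 1 := rfl
    rw [e1, e2, e3, e4, e5]
    have h1 : ℓ.choose (j+1) * (j+1) = ℓ.choose j * k := by
      rw [Nat.choose_succ_right_eq]
    have h2 := id2 a k hk1
    generalize ℓ.choose (j+1) = C1 at *
    generalize ℓ.choose j = C0 at *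
    generalize (a-2).choose (2*k-2) = B2 at *
    generalize a.choose (2*k) = B0 at *
    generalize (2*k-3)‼ = d3 at *
    generalize (2*k-1)‼ = d1 at *
    generalize hA1 : a - 1 = A1 at *
    zify at h1 h2 ⊢
    linear_combination (B2 * d3 * a * A1 : ℤ) * h1 - (C0 * k : ℤ) * h2
  · have h0 : ℓ - j = 0 := by omega
    rw [Nat.choose_eq_zero_of_lt (by omega), h0]
    ring

lemma df_pos : ∀ k : ℕ, 0 < k‼
  | 0 => by simp [Nat.doubleFactorial]
  | 1 => by simp [Nat.doubleFactorial]
  | (n+2) => by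
      rw [Nat.doubleFactorial]
      exact Nat.mul_pos (by omega) (df_pos n)

lemma one_sub_pow_le {p : ℝ} (h0 : 0 ≤ p) (h1 : p ≤ 1) : ∀ j : ℕ, 1 - p^j ≤ j * (1-p)
  | 0 => by simp
  | (j+1) => by
      have ih := one_sub_pow_le h0 h1 j
      have hpj : p^j ≤ 1 := pow_le_one₀ h0 h1
      have hh : p * (1 - p^j) ≤ 1 - p^j := by nlinarith
      rw [pow_succ]
      push_cast
      nlinarith [ih, hh]

/-- the natural-number quantity `t j` -/
def tfun (n ℓ j : ℕ) : ℕ := ℓ.choose j * ((n - 2*j).choose (2*(ℓ-j)) * (2*(ℓ-j)-1)‼)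

lemma t_step (n ℓ j : ℕ) (hl : 1 ≤ ℓ) (hn : 2*ℓ < n) :
    (tfun n ℓ (j+1) : ℝ) ≤ (2*(ℓ:ℝ)^2/(((n - 2*ℓ : ℕ):ℝ)^2)) * tfun n ℓ j := by
  have hid : (tfun n ℓ (j+1) : ℝ) * ((j+1) * (((n-2*j : ℕ):ℝ) * ((n-2*j-1 : ℕ):ℝ)))
      = 2 * ((ℓ-j : ℕ):ℝ)^2 * tfun n ℓ j := by
    have := t_rec n ℓ j
    have hcast := congrArg (fun x : ℕ => (x:ℝ)) this
    push_cast at hcast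
    rw [tfun, tfun]
    push_cast
    linarith [hcast]
  have hd0 : (0:ℝ) < ((n - 2*ℓ : ℕ):ℝ)^2 := by
    have : 0 < n - 2*ℓ := by omega
    positivity
  by_cases hjl : j < ℓ
  · have hmul : ((n - 2*ℓ : ℕ):ℝ)^2 ≤ (j+1) * (((n-2*j : ℕ):ℝ) * ((n-2*j-1 : ℕ):ℝ)) := by
      have h1 : (n - 2*ℓ) * (n - 2*ℓ) ≤ (n-2*j) * (n-2*j-1) := by
        apply Nat.mul_le_mul <;> omega
      have h2 : ((n - 2*ℓ : ℕ):ℝ) * ((n - 2*ℓ : ℕ):ℝ)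
          ≤ ((n-2*j : ℕ):ℝ) * ((n-2*j-1 : ℕ):ℝ) := by exact_mod_cast h1
      have h3 : (1:ℝ) ≤ (j:ℝ)+1 := by have := Nat.cast_nonneg (α := ℝ) j; linarith
      nlinarith [sq_nonneg (((n - 2*ℓ : ℕ):ℝ))]
    have htnonneg : (0:ℝ) ≤ (tfun n ℓ (j+1) : ℝ) := Nat.cast_nonneg _
    have hlj : ((ℓ-j : ℕ):ℝ) ≤ (ℓ:ℝ) := by exact_mod_cast Nat.sub_le ℓ j
    have hkey : (tfun n ℓ (j+1) : ℝ) * ((n - 2*ℓ : ℕ):ℝ)^2 ≤ 2*(ℓ:ℝ)^2 * tfun n ℓ j := by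
      calc (tfun n ℓ (j+1) : ℝ) * ((n - 2*ℓ : ℕ):ℝ)^2
          ≤ (tfun n ℓ (j+1) : ℝ) * ((j+1) * (((n-2*j : ℕ):ℝ) * ((n-2*j-1 : ℕ):ℝ))) :=
            mul_le_mul_of_nonneg_left hmul htnonneg
        _ = 2 * ((ℓ-j : ℕ):ℝ)^2 * tfun n ℓ j := hid
        _ ≤ 2*(ℓ:ℝ)^2 * tfun n ℓ j := by
            have h4 : ((ℓ-j : ℕ):ℝ)^2 ≤ (ℓ:ℝ)^2 := by
              apply pow_le_pow_left₀ (Nat.cast_nonneg _) hlj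
            have h5 : (0:ℝ) ≤ (tfun n ℓ j : ℝ) := Nat.cast_nonneg _
            nlinarith
    rw [div_mul_eq_mul_div, le_div_iff₀ hd0]
    linarith [hkey]
  · have hz : tfun n ℓ (j+1) = 0 := by
      rw [tfun, Nat.choose_eq_zero_of_lt (by omega)]
      ring
    rw [hz]
    push_cast
    positivity

lemma t_decay (n ℓ : ℕ) (hl : 1 ≤ ℓ) (hn : 2*ℓ < n) (i : ℕ) :
    (tfun n ℓ (1+i) : ℝ) ≤ (tfun n ℓ 1 : ℝ) * (2*(ℓ:ℝ)^2/(((n - 2*ℓ : ℕ):ℝ)^2))^i := by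
  induction i with
  | zero => simp
  | succ i ih =>
    have hr0 : (0:ℝ) ≤ 2*(ℓ:ℝ)^2/(((n - 2*ℓ : ℕ):ℝ)^2) := by positivity
    calc (tfun n ℓ (1+(i+1)) : ℝ) = (tfun n ℓ ((1+i)+1) : ℝ) := by ring_nf
      _ ≤ (2*(ℓ:ℝ)^2/(((n - 2*ℓ : ℕ):ℝ)^2)) * tfun n ℓ (1+i) := t_step n ℓ (1+i) hl hn
      _ ≤ (2*(ℓ:ℝ)^2/(((n - 2*ℓ : ℕ):ℝ)^2)) * ((tfun n ℓ 1 : ℝ)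
            * (2*(ℓ:ℝ)^2/(((n - 2*ℓ : ℕ):ℝ)^2))^i) := by
          exact mul_le_mul_of_nonneg_left ih hr0
      _ = (tfun n ℓ 1 : ℝ) * (2*(ℓ:ℝ)^2/(((n - 2*ℓ : ℕ):ℝ)^2))^(i+1) := by ring

lemma geom_term_bound {q : ℝ} (h0 : 0 ≤ q) (h4 : q ≤ 1/4) (i : ℕ) :
    ((i+2 : ℕ):ℝ) * q^(i+1) ≤ 8 * q * (1/2)^(i+2) := by
  have h1 : ((i+2 : ℕ):ℝ) ≤ 2^(i+1) := by
    have h1' : i+2 ≤ 2^(i+1) := Nat.succ_le_of_lt (Nat.lt_two_pow_self (n := i+1))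
    exact_mod_cast h1'
  have h2 : q^(i+1) = q * q^i := by ring
  have h3 : q^i ≤ (1/4)^i := pow_le_pow_left₀ h0 h4 i
  have h5 : (0:ℝ) ≤ q^i := by positivity
  calc ((i+2 : ℕ):ℝ) * q^(i+1) = ((i+2 : ℕ):ℝ) * q * q^i := by ring
    _ ≤ 2^(i+1) * q * (1/4)^i := by
        apply mul_le_mul (mul_le_mul_of_nonneg_right h1 h0) h3 h5
        positivity
    _ = 8 * q * (1/2)^(i+2) := by
        have e1 : (2:ℝ)^(i+1) * (1/4)^i = 2 * (1/2)^i := by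
          rw [pow_succ, mul_comm ((2:ℝ)^i) 2, mul_assoc, ← mul_pow]
          norm_num
        have e2 : ((1:ℝ)/2)^(i+2) = (1/2)^i * (1/4) := by
          rw [pow_add]; norm_num
        rw [e2]
        linear_combination q * e1

lemma geom_sum_bound {q : ℝ} (h0 : 0 ≤ q) (h4 : q ≤ 1/4) (m : ℕ) :
    ∑ j ∈ Finset.range m, (if 2 ≤ j then (j:ℝ) * q^(j-1) else 0) ≤ 16 * q := by
  have hterm : ∀ j ∈ Finset.range m,
      (if 2 ≤ j then (j:ℝ) * q^(j-1) else 0) ≤ 8 * q * (1/2)^j := by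
    intro j _
    split_ifs with h
    · obtain ⟨i, rfl⟩ : ∃ i, j = i + 2 := ⟨j - 2, by omega⟩
      have := geom_term_bound h0 h4 i
      simpa using this
    · positivity
  calc ∑ j ∈ Finset.range m, (if 2 ≤ j then (j:ℝ) * q^(j-1) else 0)
      ≤ ∑ j ∈ Finset.range m, 8 * q * (1/2)^j := Finset.sum_le_sum hterm
    _ = 8 * q * ∑ j ∈ Finset.range m, (1/2)^j := by rw [Finset.mul_sum]
    _ ≤ 8 * q * 2 := by
        apply mul_le_mul_of_nonneg_left (sum_geometric_two_le m) (by positivity)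
    _ = 16 * q := by ring


lemma pointwise_bound (ℓ j : ℕ) (p : ℝ) (hp0 : 0 < p) (hp1 : p < 1) (hl : 1 ≤ ℓ)
    (hj : j ≤ ℓ) :
    |(p^(2*ℓ - j) - p^(2*ℓ)) - (j:ℝ)*(p^(2*ℓ-1)*(1-p))|
      ≤ (if 2 ≤ j then (j:ℝ)*(p^(2*ℓ-j)*(1-p)) else 0) := by
  match j with
  | 0 => simp
  | 1 =>
    rw [if_neg (by omega)]
    have hA2 : p^(2*ℓ) = p^(2*ℓ-1)*p := by
      rw [← pow_succ, show 2*ℓ-1+1 = 2*ℓ by omega]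
    rw [hA2]
    push_cast
    rw [show (p ^ (2 * ℓ - 1) - p ^ (2 * ℓ - 1) * p) - 1 * (p ^ (2 * ℓ - 1) * (1 - p)) = 0
      by ring]
    simp
  | (i+2) =>
    rw [if_pos (by omega)]
    set j := i + 2 with hjdef
    have hA1 : p^(2*ℓ) = p^(2*ℓ-j)*p^j := by
      rw [← pow_add, show 2*ℓ-j+j = 2*ℓ by omega]
    have hA2 : p^(2*ℓ) = p^(2*ℓ-1)*p := by
      rw [← pow_succ, show 2*ℓ-1+1 = 2*ℓ by omega]
    have hpj1 : p^j ≤ 1 := pow_le_one₀ hp0.le hp1.le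
    have hp2lj : (0:ℝ) < p^(2*ℓ-j) := pow_pos hp0 _
    have hApos : (0:ℝ) ≤ p^(2*ℓ-j) - p^(2*ℓ) := by rw [hA1]; nlinarith
    have hAle : p^(2*ℓ-j) - p^(2*ℓ) ≤ (j:ℝ) * (p^(2*ℓ-j)*(1-p)) := by
      rw [hA1]
      have := one_sub_pow_le hp0.le hp1.le j
      nlinarith
    have hBpos : (0:ℝ) ≤ (j:ℝ)*(p^(2*ℓ-1)*(1-p)) := by
      have h1p : (0:ℝ) ≤ 1 - p := by linarith
      positivity
    have hBle : (j:ℝ)*(p^(2*ℓ-1)*(1-p)) ≤ (j:ℝ)*(p^(2*ℓ-j)*(1-p)) := by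
      have hpow : p^(2*ℓ-1) ≤ p^(2*ℓ-j) :=
        pow_le_pow_of_le_one hp0.le hp1.le (by omega)
      have : (0:ℝ) ≤ (j:ℝ) := Nat.cast_nonneg _
      nlinarith
    rw [abs_le]
    constructor <;> nlinarith

set_option maxHeartbeats 2000000 in
lemma main_estimate (n ℓ : ℕ) (p : ℝ) (hp0 : 0 < p) (hp1 : p < 1) (hl : 1 ≤ ℓ)
    (hn : 2*ℓ < n)
    (hq : 2*(ℓ:ℝ)^2/(((n - 2*ℓ : ℕ):ℝ)^2) / p ≤ 1/4) :
    |erVar n ℓ p / sigmaBarSq n ℓ p - 1|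
      ≤ 16 * (2*(ℓ:ℝ)^2/(((n - 2*ℓ : ℕ):ℝ)^2) / p) := by
  classical
  set r : ℝ := 2*(ℓ:ℝ)^2/(((n - 2*ℓ : ℕ):ℝ)^2) with hrdef
  have hr0 : 0 ≤ r := by positivity
  have hq0 : 0 ≤ r / p := by positivity
  set ℳ := matchings n ℓ Finset.univ with hℳ
  set P := ℳ ×ˢ ℳ with hP
  set Nm := ℳ.card with hNmdef
  have hNm : Nm = n.choose (2*ℓ) * (2*ℓ-1)‼ := by
    have := card_matchings n ℓ Finset.univ
    rwa [Finset.card_univ, Fintype.card_fin] at this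
  have htf1 : tfun n ℓ 1 = ℓ * ((n - 2).choose (2*(ℓ-1)) * (2*(ℓ-1)-1)‼) := by
    rw [tfun, Nat.choose_one_right, show 2*1 = 2 from rfl]
  have hT1 : ∑ x ∈ P, (x.1 ∩ x.2).card = Nm * tfun n ℓ 1 := by
    rw [hP, hℳ, T1_eq n ℓ hl, htf1, ← hℳ, ← hNmdef]
  have hpowsucc : p^(2*ℓ) = p^(2*ℓ-1)*p := by
    rw [← pow_succ, show 2*ℓ-1+1 = 2*ℓ by omega]
  have hσ : sigmaBarSq n ℓ p = ((Nm * tfun n ℓ 1 : ℕ):ℝ) * (p^(2*ℓ-1) * (1-p)) := by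
    rw [sigmaBarSq, hNm, htf1, show 2*(ℓ-1) = 2*ℓ-2 by omega,
      show 2*ℓ-2-1 = 2*ℓ-3 by omega, hpowsucc]
    push_cast
    ring
  have hσpos : 0 < sigmaBarSq n ℓ p := by
    rw [hσ]
    have h1 : 0 < Nm := by
      rw [hNm]
      exact Nat.mul_pos (Nat.choose_pos (by omega)) (df_pos _)
    have h2 : 0 < tfun n ℓ 1 := by
      rw [htf1]
      exact Nat.mul_pos (by omega) (Nat.mul_pos (Nat.choose_pos (by omega)) (df_pos _))
    have h3 : (0:ℝ) < ((Nm * tfun n ℓ 1 : ℕ):ℝ) := by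
      exact_mod_cast Nat.mul_pos h1 h2
    have h4 : (0:ℝ) < p^(2*ℓ-1) := pow_pos hp0 _
    exact mul_pos h3 (mul_pos h4 (by linarith))
  -- scard ≤ ℓ on P
  have hscard : ∀ x ∈ P, (x.1 ∩ x.2).card ≤ ℓ := by
    intro x hx
    rw [hP, Finset.mem_product] at hx
    obtain ⟨-, hc1, -⟩ := mem_matchings.mp hx.1
    calc (x.1 ∩ x.2).card ≤ x.1.card := Finset.card_le_card Finset.inter_subset_left
      _ = ℓ := hc1
  -- variance as a sum
  have hVar : erVar n ℓ p = ∑ x ∈ P, (p^(2*ℓ - (x.1 ∩ x.2).card) - p^(2*ℓ)) := by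
    rw [erVar_eq]
    apply Finset.sum_congr rfl
    intro x hx
    rw [Finset.mem_product] at hx
    obtain ⟨-, hc1, -⟩ := mem_matchings.mp hx.1
    obtain ⟨-, hc2, -⟩ := mem_matchings.mp hx.2
    have hu : (x.1 ∪ x.2).card = 2*ℓ - (x.1 ∩ x.2).card := by
      have := Finset.card_union_add_card_inter x.1 x.2
      omega
    rw [hu, show p^ℓ*p^ℓ = p^(2*ℓ) by rw [← pow_add]; congr 1; omega]
  -- sigma as a sum
  have hσsum : sigmaBarSq n ℓ p
      = ∑ x ∈ P, ((x.1 ∩ x.2).card : ℝ) * (p^(2*ℓ-1) * (1-p)) := by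
    rw [hσ, ← hT1, ← Finset.sum_mul]
    push_cast
    ring
  -- the F function
  set F : ℕ → ℝ := fun j => if 2 ≤ j then (j:ℝ)*(p^(2*ℓ-j)*(1-p)) else 0 with hFdef
  have hFnn : ∀ j, 0 ≤ F j := by
    intro j
    rw [hFdef]
    dsimp only
    split_ifs
    · have : (0:ℝ) ≤ p^(2*ℓ-j) := by positivity
      have : (0:ℝ) ≤ 1 - p := by linarith
      positivity
    · exact le_refl _
  -- |Var - σ| ≤ W
  have hdiff : |erVar n ℓ p - sigmaBarSq n ℓ p| ≤ ∑ x ∈ P, F ((x.1 ∩ x.2).card) := by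
    rw [hVar, hσsum, ← Finset.sum_sub_distrib]
    calc |∑ x ∈ P, ((p^(2*ℓ - (x.1 ∩ x.2).card) - p^(2*ℓ))
            - ((x.1 ∩ x.2).card : ℝ) * (p^(2*ℓ-1)*(1-p)))|
        ≤ ∑ x ∈ P, |(p^(2*ℓ - (x.1 ∩ x.2).card) - p^(2*ℓ))
            - ((x.1 ∩ x.2).card : ℝ) * (p^(2*ℓ-1)*(1-p))| :=
          Finset.abs_sum_le_sum_abs _ _
      _ ≤ ∑ x ∈ P, F ((x.1 ∩ x.2).card) := by
          apply Finset.sum_le_sum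
          intro x hx
          exact pointwise_bound ℓ _ p hp0 hp1 hl (hscard x hx)
  -- W bound via fibers
  have hWsum : ∑ x ∈ P, F ((x.1 ∩ x.2).card)
      ≤ ∑ j ∈ Finset.range (ℓ+1), ((Nm * tfun n ℓ j : ℕ):ℝ) * F j := by
    have hcomp := Finset.sum_comp (s := P) F (fun x => (x.1 ∩ x.2).card)
    have himg : P.image (fun x => (x.1 ∩ x.2).card) ⊆ Finset.range (ℓ+1) := by
      intro j hj
      obtain ⟨x, hx, rfl⟩ := Finset.mem_image.mp hj
      exact Finset.mem_range.mpr (by have := hscard x hx; omega)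
    refine le_trans (le_of_eq hcomp) (le_trans
      (Finset.sum_le_sum_of_subset_of_nonneg himg fun j _ _ => nsmul_nonneg (hFnn j) _)
      (Finset.sum_le_sum fun j _ => ?_))
    rw [nsmul_eq_mul]
    apply mul_le_mul_of_nonneg_right _ (hFnn j)
    have hNj := Nj_le n ℓ j
    rw [← hℳ, ← hP, ← hNmdef] at hNj
    exact_mod_cast Nat.cast_le.mpr hNj
  -- per-j comparison to the geometric series
  have hperj : ∀ j ∈ Finset.range (ℓ+1), ((Nm * tfun n ℓ j : ℕ):ℝ) * F j
      ≤ ((Nm * tfun n ℓ 1 : ℕ):ℝ) * (p^(2*ℓ-1) * (1-p))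
          * (if 2 ≤ j then (j:ℝ)*(r/p)^(j-1) else 0) := by
    intro j hj
    rw [Finset.mem_range] at hj
    by_cases h2j : 2 ≤ j
    · rw [hFdef]
      dsimp only
      rw [if_pos h2j, if_pos h2j]
      have htj : (tfun n ℓ j : ℝ) ≤ (tfun n ℓ 1 : ℝ) * r^(j-1) := by
        have := t_decay n ℓ hl hn (j-1)
        rwa [show 1+(j-1) = j by omega] at this
      have hsplit : p^(2*ℓ-1) = p^(2*ℓ-j) * p^(j-1) := by
        rw [← pow_add]; congr 1; omega
      have hrp : (r/p)^(j-1) * p^(j-1) = r^(j-1) := by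
        rw [div_pow, div_mul_cancel₀]
        exact pow_ne_zero _ (ne_of_gt hp0)
      have h1p : (0:ℝ) ≤ 1 - p := by linarith
      have hnn : (0:ℝ) ≤ (j:ℝ)*(p^(2*ℓ-j)*(1-p)) := by positivity
      push_cast
      calc (Nm:ℝ) * (tfun n ℓ j : ℝ) * ((j:ℝ)*(p^(2*ℓ-j)*(1-p)))
          ≤ (Nm:ℝ) * ((tfun n ℓ 1:ℝ) * r^(j-1)) * ((j:ℝ)*(p^(2*ℓ-j)*(1-p))) := by
            apply mul_le_mul_of_nonneg_right
              (mul_le_mul_of_nonneg_left htj (Nat.cast_nonneg _)) hnn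
        _ = (Nm:ℝ) * (tfun n ℓ 1:ℝ) * (p^(2*ℓ-1)*(1-p)) * ((j:ℝ)*(r/p)^(j-1)) := by
            rw [hsplit, ← hrp]; ring
    · rw [hFdef]
      dsimp only
      rw [if_neg h2j, if_neg h2j]
      simp
  have hgeo : ∑ j ∈ Finset.range (ℓ+1), (if 2 ≤ j then (j:ℝ)*(r/p)^(j-1) else 0)
      ≤ 16*(r/p) := geom_sum_bound hq0 hq (ℓ+1)
  have hbase : (0:ℝ) ≤ ((Nm * tfun n ℓ 1 : ℕ):ℝ) * (p^(2*ℓ-1) * (1-p)) := by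
    have h1p : (0:ℝ) ≤ 1 - p := by linarith
    positivity
  have hW2 : ∑ x ∈ P, F ((x.1 ∩ x.2).card) ≤ sigmaBarSq n ℓ p * (16*(r/p)) := by
    calc ∑ x ∈ P, F ((x.1 ∩ x.2).card)
        ≤ ∑ j ∈ Finset.range (ℓ+1), ((Nm * tfun n ℓ j : ℕ):ℝ) * F j := hWsum
      _ ≤ ∑ j ∈ Finset.range (ℓ+1), ((Nm * tfun n ℓ 1 : ℕ):ℝ) * (p^(2*ℓ-1) * (1-p))
            * (if 2 ≤ j then (j:ℝ)*(r/p)^(j-1) else 0) := Finset.sum_le_sum hperj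
      _ = ((Nm * tfun n ℓ 1 : ℕ):ℝ) * (p^(2*ℓ-1) * (1-p))
            * ∑ j ∈ Finset.range (ℓ+1), (if 2 ≤ j then (j:ℝ)*(r/p)^(j-1) else 0) := by
          rw [Finset.mul_sum]
      _ ≤ ((Nm * tfun n ℓ 1 : ℕ):ℝ) * (p^(2*ℓ-1) * (1-p)) * (16*(r/p)) :=
          mul_le_mul_of_nonneg_left hgeo hbase
      _ = sigmaBarSq n ℓ p * (16*(r/p)) := by rw [hσ]
  have heq : erVar n ℓ p / sigmaBarSq n ℓ p - 1
      = (erVar n ℓ p - sigmaBarSq n ℓ p) / sigmaBarSq n ℓ p := by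
    field_simp
  rw [heq, abs_div, abs_of_pos hσpos, div_le_iff₀ hσpos]
  calc |erVar n ℓ p - sigmaBarSq n ℓ p| ≤ ∑ x ∈ P, F ((x.1 ∩ x.2).card) := hdiff
    _ ≤ sigmaBarSq n ℓ p * (16*(r/p)) := hW2
    _ = 16 * (r/p) * sigmaBarSq n ℓ p := by ring
open Filter Asymptotics in
/-- If `1 - p = Ω(1)` and `ℓ = o(n√p)`, then `Var(X_{n,ℓ}) ~ σ̄²`. -/
theorem variance_asymptotics (p : ℕ → ℝ) (ℓ : ℕ → ℕ)
    (hp : ∀ n, 0 < p n ∧ p n < 1)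
    (hΩ : ∃ c > 0, ∀ᶠ n in atTop, c ≤ 1 - p n)
    (hℓ1 : ∀ n, 1 ≤ ℓ n)
    (ho : (fun n => (ℓ n : ℝ)) =o[atTop] fun n => (n : ℝ) * Real.sqrt (p n)) :
    Tendsto (fun n => erVar n (ℓ n) (p n) / sigmaBarSq n (ℓ n) (p n)) atTop (nhds 1) := by
  have hD : Tendsto (fun m => (ℓ m : ℝ) / ((m:ℝ) * Real.sqrt (p m))) atTop (nhds 0) := by
    refine (Asymptotics.isLittleO_iff_tendsto' ?_).mp ho
    filter_upwards [eventually_ge_atTop 1] with m hm h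
    exfalso
    have h1 : (0:ℝ) < (m:ℝ) := by exact_mod_cast hm
    have h2 : (0:ℝ) < Real.sqrt (p m) := Real.sqrt_pos.mpr (hp m).1
    nlinarith [h]
  have hDnn : ∀ m, 0 ≤ (ℓ m : ℝ) / ((m:ℝ) * Real.sqrt (p m)) := by
    intro m
    apply div_nonneg (Nat.cast_nonneg _)
    positivity
  have hbound : ∀ᶠ m in atTop,
      |erVar m (ℓ m) (p m) / sigmaBarSq m (ℓ m) (p m) - 1|
        ≤ 128 * ((ℓ m : ℝ) / ((m:ℝ) * Real.sqrt (p m)))^2 := by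
    filter_upwards [hD.eventually (gt_mem_nhds (show (0:ℝ) < 1/100 by norm_num)),
      eventually_ge_atTop 1] with m hm1 hm2
    obtain ⟨hp0, hp1⟩ := hp m
    have hl := hℓ1 m
    have hm0 : (0:ℝ) < (m:ℝ) := by exact_mod_cast hm2
    have hsp : 0 < Real.sqrt (p m) := Real.sqrt_pos.mpr hp0
    have hsp1 : Real.sqrt (p m) ≤ 1 := by
      rw [show (1:ℝ) = Real.sqrt 1 by simp]
      exact Real.sqrt_le_sqrt hp1.le
    have hden : 0 < (m:ℝ) * Real.sqrt (p m) := by positivity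
    set Dm := (ℓ m : ℝ) / ((m:ℝ) * Real.sqrt (p m)) with hDmdef
    have hDm0 : 0 ≤ Dm := hDnn m
    have hℓlt : (ℓ m : ℝ) * 100 < (m:ℝ) * Real.sqrt (p m) := by
      rw [hDmdef, div_lt_iff₀ hden] at hm1
      linarith
    have hℓm : 100 * (ℓ m:ℝ) < (m:ℝ) := by nlinarith
    have hln : 100 * ℓ m < m := by exact_mod_cast hℓm
    have hn2 : 2 * ℓ m < m := by omega
    have hcast : ((m - 2*ℓ m : ℕ):ℝ) = (m:ℝ) - 2*(ℓ m:ℝ) := by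
      rw [Nat.cast_sub (by omega)]
      push_cast
      ring
    have hhalf : (m:ℝ)/2 ≤ ((m - 2*ℓ m : ℕ):ℝ) := by
      rw [hcast]
      linarith
    have hD2 : Dm^2 = (ℓ m:ℝ)^2 / ((m:ℝ)^2 * p m) := by
      rw [hDmdef, div_pow, mul_pow, Real.sq_sqrt hp0.le]
    have hQle : 2*(ℓ m:ℝ)^2/(((m - 2*ℓ m : ℕ):ℝ)^2) / (p m) ≤ 8 * Dm^2 := by
      have hb0 : (0:ℝ) < ((m:ℝ)/2)^2 * p m := by positivity
      have hble : ((m:ℝ)/2)^2 * p m ≤ (((m - 2*ℓ m : ℕ):ℝ))^2 * p m := by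
        apply mul_le_mul_of_nonneg_right _ hp0.le
        apply pow_le_pow_left₀ (by positivity) hhalf
      rw [div_div, hD2]
      calc 2*(ℓ m:ℝ)^2 / ((((m - 2*ℓ m:ℕ):ℝ))^2 * p m)
          ≤ 2*(ℓ m:ℝ)^2 / (((m:ℝ)/2)^2 * p m) :=
            div_le_div_of_nonneg_left (by positivity) hb0 hble
        _ = 8 * ((ℓ m:ℝ)^2/((m:ℝ)^2 * p m)) := by
            field_simp
            ring
    have hQ14 : 2*(ℓ m:ℝ)^2/(((m - 2*ℓ m : ℕ):ℝ)^2) / (p m) ≤ 1/4 := by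
      rw [hDmdef] at hQle
      nlinarith [hm1, hDnn m, hQle]
    have hest := main_estimate m (ℓ m) (p m) hp0 hp1 hl hn2 hQ14
    calc |erVar m (ℓ m) (p m) / sigmaBarSq m (ℓ m) (p m) - 1|
        ≤ 16 * (2*(ℓ m:ℝ)^2/(((m - 2*ℓ m : ℕ):ℝ)^2) / (p m)) := hest
      _ ≤ 128 * Dm^2 := by nlinarith [hQle]
  have h128 : Tendsto (fun m => 128 * ((ℓ m : ℝ) / ((m:ℝ) * Real.sqrt (p m)))^2)
      atTop (nhds 0) := by
    have h0 := (hD.mul hD).const_mul (128:ℝ)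
    simp only [mul_zero] at h0
    refine h0.congr fun m => ?_
    ring
  have t1 : Tendsto (fun m => 1 - 128 * ((ℓ m : ℝ) / ((m:ℝ) * Real.sqrt (p m)))^2)
      atTop (nhds 1) := by
    have := (tendsto_const_nhds (x := (1:ℝ)) (f := atTop (α := ℕ))).sub h128
    simpa using this
  have t2 : Tendsto (fun m => 1 + 128 * ((ℓ m : ℝ) / ((m:ℝ) * Real.sqrt (p m)))^2)
      atTop (nhds 1) := by
    have := (tendsto_const_nhds (x := (1:ℝ)) (f := atTop (α := ℕ))).add h128
    simpa using this
  refine tendsto_of_tendsto_of_tendsto_of_le_of_le' t1 t2 ?_ ?_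
  · filter_upwards [hbound] with m hm
    have := abs_le.mp hm
    linarith [this.1]
  · filter_upwards [hbound] with m hm
    have := abs_le.mp hm
    linarith [this.2]
end
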